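/- Let k ≥ 2 and let G be the simple graph obtained from the odd wheel W_{2k+1} by adding an edge joining two nonadjacent rim vertices. Then G contains an odd conformal bicycle. -/

import Mathlib

open SimpleGraph

variable {V : Type*}

/-- A conformal bicycle: two vertex-disjoint cycles whose complement
(in the vertex set) induces a subgraph having a perfect matching. -/
def IsConformalBicycle (G : SimpleGraph V) {a b : V} (c₁ : G.Walk a a) (c₂ : G.Walk b b) : Prop :=
  c₁.IsCycle ∧ c₂.IsCycle ∧ (∀ x ∈ c₁.support, x ∉ c₂.support) ∧
    ∃ M : G.Subgraph, M.IsMatching ∧ M.verts = {v | v ∉ c₁.support ∧ v ∉ c₂.support}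

def HasConformalBicycle (G : SimpleGraph V) : Prop :=
  ∃ (a b : V) (c₁ : G.Walk a a) (c₂ : G.Walk b b), IsConformalBicycle G c₁ c₂

def HasOddConformalBicycle (G : SimpleGraph V) : Prop :=
  ∃ (a b : V) (c₁ : G.Walk a a) (c₂ : G.Walk b b),
    IsConformalBicycle G c₁ c₂ ∧ Odd c₁.length ∧ Odd c₂.length

def HasEvenConformalBicycle (G : SimpleGraph V) : Prop :=
  ∃ (a b : V) (c₁ : G.Walk a a) (c₂ : G.Walk b b),
    IsConformalBicycle G c₁ c₂ ∧ Even c₁.length ∧ Even c₂.length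

/-- The odd wheel with `n` rim vertices: the join of a cycle on `ZMod n`
with the extra hub vertex `none`. -/
def oddWheel (n : ℕ) : SimpleGraph (Option (ZMod n)) :=
  SimpleGraph.fromRel (fun a b =>
    a = none ∨ ∃ i j : ZMod n, a = some i ∧ b = some j ∧ j = i + 1)

lemma zmod_cast_inj {n m m' : ℕ} (hm : m < n) (hm' : m' < n)
    (h : (m : ZMod n) = (m' : ZMod n)) : m = m' := by
  have := congrArg ZMod.val h
  rwa [ZMod.val_natCast_of_lt hm, ZMod.val_natCast_of_lt hm'] at this

lemma oddWheel_adj_rim {n : ℕ} (hn : 1 < n) {x y : ZMod n} (hxy : y = x + 1) :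
    (oddWheel n).Adj (some x) (some y) := by
  subst hxy
  refine ⟨?_, Or.inl (Or.inr ⟨x, x + 1, rfl, rfl, rfl⟩)⟩
  simp only [Ne, Option.some.injEq]
  intro hx
  have h1 : (1 : ZMod n) = 0 := left_eq_add.mp hx
  have : (1 : ℕ) = (0 : ℕ) := zmod_cast_inj hn (by omega) (by push_cast; exact h1)
  omega

lemma oddWheel_adj_hub {n : ℕ} (x : ZMod n) : (oddWheel n).Adj none (some x) :=
  ⟨by simp, Or.inl (Or.inl rfl)⟩

def rimWalk {n : ℕ} {G : SimpleGraph (Option (ZMod n))} (hG : oddWheel n ≤ G) (hn : 1 < n) :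
    ∀ (m : ℕ) (a : ZMod n), G.Walk (some a) (some (a + (m : ZMod n)))
  | 0, a => Walk.nil.copy rfl (by simp)
  | m+1, a => (Walk.cons (hG (oddWheel_adj_rim hn rfl)) (rimWalk hG hn m (a+1))).copy rfl
      (by rw [show a + 1 + (m : ZMod n) = a + ((m+1 : ℕ) : ZMod n) by push_cast; ring])

lemma zmod_shift {n : ℕ} (a : ZMod n) (r : ℕ) :
    a + 1 + (r : ZMod n) = a + ((r + 1 : ℕ) : ZMod n) := by push_cast; ring

lemma rimWalk_support {n : ℕ} {G : SimpleGraph (Option (ZMod n))} (hG : oddWheel n ≤ G)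
    (hn : 1 < n) (m : ℕ) (a : ZMod n) :
    (rimWalk hG hn m a).support = (List.range (m+1)).map (fun (r : ℕ) => some (a + (r : ZMod n))) := by
  induction m generalizing a with
  | zero => simp [rimWalk, List.range_succ]
  | succ m ih =>
    rw [rimWalk, Walk.support_copy, Walk.support_cons, ih]
    conv_rhs => rw [List.range_succ_eq_map, List.map_cons, List.map_map]
    congr 1
    · simp
    · apply List.map_congr_left
      intro r _
      simp only [Function.comp_apply, Nat.succ_eq_add_one, zmod_shift]

lemma rimWalk_edges {n : ℕ} {G : SimpleGraph (Option (ZMod n))} (hG : oddWheel n ≤ G)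
    (hn : 1 < n) (m : ℕ) (a : ZMod n) :
    (rimWalk hG hn m a).edges =
      (List.range m).map (fun (r : ℕ) => s(some (a + (r : ZMod n)), some (a + ((r+1 : ℕ) : ZMod n)))) := by
  induction m generalizing a with
  | zero => simp [rimWalk]
  | succ m ih =>
    rw [rimWalk, Walk.edges_copy, Walk.edges_cons, ih]
    conv_rhs => rw [List.range_succ_eq_map, List.map_cons, List.map_map]
    congr 1
    · norm_num
    · apply List.map_congr_left
      intro r _
      simp only [Function.comp_apply, Nat.succ_eq_add_one, zmod_shift]

lemma rimWalk_length {n : ℕ} {G : SimpleGraph (Option (ZMod n))} (hG : oddWheel n ≤ G)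
    (hn : 1 < n) (m : ℕ) (a : ZMod n) : (rimWalk hG hn m a).length = m := by
  induction m generalizing a with
  | zero => simp [rimWalk]
  | succ m ih => rw [rimWalk, Walk.length_copy, Walk.length_cons, ih]

lemma main_bicycle {n : ℕ} (hodd : Odd n) (hn5 : 5 ≤ n)
    {G : SimpleGraph (Option (ZMod n))} (hG : oddWheel n ≤ G)
    (a : ZMod n) (t : ℕ) (ht2 : 2 ≤ t) (htn : t + 3 ≤ n) (hte : Even t)
    (hchord : G.Adj (some (a + (t : ZMod n))) (some a)) :
    HasOddConformalBicycle G := by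
  have hn1 : 1 < n := by omega
  haveI : NeZero n := ⟨by omega⟩
  have h12 : (1 : ZMod n) ≠ 2 := by
    intro h
    have := zmod_cast_inj (n := n) (show (1:ℕ) < n by omega) (show (2:ℕ) < n by omega)
      (by push_cast; exact h)
    omega
  obtain ⟨t2, ht2eq⟩ := hte
  obtain ⟨n2, hn2eq⟩ := hodd
  have hFinj : ∀ r r' : ℕ, r < n → r' < n →
      (some (a + (r : ZMod n)) : Option (ZMod n)) = some (a + (r' : ZMod n)) → r = r' := by
    intro r r' h h' e
    exact zmod_cast_inj h h' (add_left_cancel (Option.some_injective _ e))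
  set p : G.Walk (some (a + (t : ZMod n))) (some a) := (rimWalk hG hn1 t a).reverse with hp
  set c1 : G.Walk (some a) (some a) := Walk.cons hchord.symm p with hc1def
  have hb12 : a + ((t+2 : ℕ) : ZMod n) = a + ((t+1 : ℕ) : ZMod n) + 1 := by push_cast; ring
  set c2 : G.Walk (none : Option (ZMod n)) none :=
    Walk.cons (hG (oddWheel_adj_hub (a + ((t+1 : ℕ) : ZMod n))))
      (Walk.cons (hG (oddWheel_adj_rim hn1 hb12))
        (Walk.cons (hG (oddWheel_adj_hub (a + ((t+2 : ℕ) : ZMod n)))).symm Walk.nil)) with hc2def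
  have hc1sup : ∀ x, x ∈ c1.support ↔ ∃ r : ℕ, r ≤ t ∧ x = some (a + (r : ZMod n)) := by
    intro x
    rw [hc1def, Walk.support_cons, hp, Walk.support_reverse]
    simp only [List.mem_cons, List.mem_reverse, rimWalk_support, List.mem_map, List.mem_range]
    constructor
    · rintro (rfl | ⟨r, hr, rfl⟩)
      · exact ⟨0, by omega, by simp⟩
      · exact ⟨r, by omega, rfl⟩
    · rintro ⟨r, hr, rfl⟩
      exact Or.inr ⟨r, by omega, rfl⟩
  have hc2sup : ∀ x, x ∈ c2.support ↔
      (x = none ∨ x = some (a + ((t+1 : ℕ) : ZMod n)) ∨ x = some (a + ((t+2 : ℕ) : ZMod n))) := by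
    intro x
    rw [hc2def]
    simp only [Walk.support_cons, Walk.support_nil, List.mem_cons, List.not_mem_nil, or_false]
    tauto
  have hFnot : ∀ m : ℕ, t + 3 ≤ m → m < n →
      (some (a + (m : ZMod n)) ∉ c1.support ∧ some (a + (m : ZMod n)) ∉ c2.support) := by
    intro m h3 hmn
    constructor
    · rw [hc1sup]
      rintro ⟨r, hr, he⟩
      have := hFinj m r hmn (by omega) he
      omega
    · rw [hc2sup]
      rintro (h | h | h)
      · exact Option.some_ne_none _ h
      · have := hFinj m (t+1) hmn (by omega) h; omega
      · have := hFinj m (t+2) hmn (by omega) h; omega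
  set q := n2 - t2 - 1 with hqdef
  have hq : 2 * q + t + 3 = n := by omega
  set M : G.Subgraph :=
    { verts := {v | v ∉ c1.support ∧ v ∉ c2.support}
      Adj := fun x y => ∃ u : ℕ, u < q ∧
        ((x = some (a + ((t+3+2*u : ℕ) : ZMod n)) ∧ y = some (a + ((t+4+2*u : ℕ) : ZMod n))) ∨
         (x = some (a + ((t+4+2*u : ℕ) : ZMod n)) ∧ y = some (a + ((t+3+2*u : ℕ) : ZMod n))))
      adj_sub := by
        rintro x y ⟨u, hu, (⟨rfl, rfl⟩ | ⟨rfl, rfl⟩)⟩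
        · exact hG (oddWheel_adj_rim hn1 (by push_cast; ring))
        · exact (hG (oddWheel_adj_rim hn1 (by push_cast; ring))).symm
      edge_vert := by
        rintro x y ⟨u, hu, (⟨rfl, _⟩ | ⟨rfl, _⟩)⟩
        · exact hFnot (t+3+2*u) (by omega) (by omega)
        · exact hFnot (t+4+2*u) (by omega) (by omega)
      symm := by
        constructor
        rintro x y ⟨u, hu, h⟩
        exact ⟨u, hu, h.symm.imp And.symm And.symm⟩ } with hM
  have hMadj : ∀ x y, M.Adj x y ↔ ∃ u : ℕ, u < q ∧
        ((x = some (a + ((t+3+2*u : ℕ) : ZMod n)) ∧ y = some (a + ((t+4+2*u : ℕ) : ZMod n))) ∨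
         (x = some (a + ((t+4+2*u : ℕ) : ZMod n)) ∧ y = some (a + ((t+3+2*u : ℕ) : ZMod n)))) := by
    intro x y
    rw [hM]
  have hMverts : M.verts = {v | v ∉ c1.support ∧ v ∉ c2.support} := by rw [hM]
  have hvert : ∀ v ∈ M.verts, ∃ m : ℕ, t + 3 ≤ m ∧ m < n ∧ v = some (a + (m : ZMod n)) := by
    intro v hv
    rw [hMverts] at hv
    obtain ⟨h1, h2⟩ := hv
    cases v with
    | none => exact absurd ((hc2sup none).mpr (Or.inl rfl)) h2
    | some x =>
      have hx : some x = some (a + (((x - a).val : ℕ) : ZMod n)) := by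
        have h' : (((x - a).val : ℕ) : ZMod n) = x - a := ZMod.natCast_rightInverse (x - a)
        rw [h']
        congr 1
        ring
      refine ⟨(x - a).val, ?_, ZMod.val_lt _, hx⟩
      by_contra hlt
      rcases (by omega : (x - a).val ≤ t ∨ (x - a).val = t + 1 ∨ (x - a).val = t + 2) with h | h | h
      · exact h1 ((hc1sup _).mpr ⟨_, h, hx⟩)
      · exact h2 ((hc2sup _).mpr (Or.inr (Or.inl (by rw [hx, h]))))
      · exact h2 ((hc2sup _).mpr (Or.inr (Or.inr (by rw [hx, h]))))
  have hmatch : M.IsMatching := by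
    intro v hv
    obtain ⟨m, hm3, hmn, rfl⟩ := hvert v hv
    rcases Nat.even_or_odd (m - (t+3)) with ⟨u, hueq⟩ | ⟨u, hueq⟩
    · have hm : m = t + 3 + 2*u := by omega
      have huq : u < q := by omega
      refine ⟨some (a + ((t+4+2*u : ℕ) : ZMod n)),
        (hMadj _ _).mpr ⟨u, huq, Or.inl ⟨by rw [hm], rfl⟩⟩, ?_⟩
      intro w hw
      rw [hMadj] at hw
      obtain ⟨u', hu', (⟨he, rfl⟩ | ⟨he, rfl⟩)⟩ := hw
      · have : m = t + 3 + 2*u' := hFinj m (t+3+2*u') hmn (by omega) he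
        have : u' = u := by omega
        rw [this]
      · have : m = t + 4 + 2*u' := hFinj m (t+4+2*u') hmn (by omega) he
        omega
    · have hm : m = t + 4 + 2*u := by omega
      have huq : u < q := by omega
      refine ⟨some (a + ((t+3+2*u : ℕ) : ZMod n)),
        (hMadj _ _).mpr ⟨u, huq, Or.inr ⟨by rw [hm], rfl⟩⟩, ?_⟩
      intro w hw
      rw [hMadj] at hw
      obtain ⟨u', hu', (⟨he, rfl⟩ | ⟨he, rfl⟩)⟩ := hw
      · have : m = t + 3 + 2*u' := hFinj m (t+3+2*u') hmn (by omega) he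
        omega
      · have : m = t + 4 + 2*u' := hFinj m (t+4+2*u') hmn (by omega) he
        have : u' = u := by omega
        rw [this]
  refine ⟨some a, none, c1, c2, ⟨?_, ?_, ?_, M, hmatch, hMverts⟩, ?_, ?_⟩
  · rw [hc1def, Walk.cons_isCycle_iff]
    constructor
    · rw [hp, Walk.isPath_reverse_iff, Walk.isPath_def, rimWalk_support]
      refine List.Nodup.map_on ?_ (List.nodup_range)
      intro r hr r' hr' he
      rw [List.mem_range] at hr hr'
      exact hFinj r r' (by omega) (by omega) he
    · rw [hp, Walk.edges_reverse, List.mem_reverse, rimWalk_edges]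
      simp only [List.mem_map, List.mem_range, not_exists, not_and]
      intro r hr he
      rw [Sym2.eq_iff] at he
      rcases he with ⟨h1, h2⟩ | ⟨h1, h2⟩
      · have e0 : r = 0 := hFinj r 0 (by omega) (by omega) (by simpa using h1)
        have e1 : (r+1 : ℕ) = t := hFinj (r+1) t (by omega) (by omega) h2
        omega
      · have e0 : r = t := hFinj r t (by omega) (by omega) h1
        have e1 : (r+1 : ℕ) = 0 := hFinj (r+1) 0 (by omega) (by omega) (by simpa using h2)
        omega
  · rw [hc2def, Walk.cons_isCycle_iff]
    have hne : a + ((t+1 : ℕ) : ZMod n) ≠ a + ((t+2 : ℕ) : ZMod n) := by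
      intro h
      have := hFinj (t+1) (t+2) (by omega) (by omega) (congrArg some h)
      omega
    constructor
    · rw [Walk.isPath_def]
      simp [hne, h12]
    · simp [Walk.edges_cons, Sym2.eq_iff, h12]
  · intro x hx
    rw [hc1sup] at hx
    obtain ⟨r, hr, rfl⟩ := hx
    rw [hc2sup]
    push_neg
    refine ⟨by simp, ?_, ?_⟩
    · intro h
      have := hFinj r (t+1) (by omega) (by omega) h
      omega
    · intro h
      have := hFinj r (t+2) (by omega) (by omega) h
      omega
  · rw [hc1def, Walk.length_cons, hp, Walk.length_reverse, rimWalk_length]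
    exact ⟨t2, by omega⟩
  · rw [hc2def]
    simp only [Walk.length_cons, Walk.length_nil]
    exact ⟨1, by ring⟩

/-- Adding an edge joining two nonadjacent rim vertices of an odd wheel
W_{2k+1} (k ≥ 2) creates an odd conformal bicycle. -/
theorem oddWheel_plus_edge_has_odd_conformal_bicycle (k : ℕ) (hk : 2 ≤ k)
    (i j : ZMod (2 * k + 1)) (hij : i ≠ j)
    (hnadj : ¬ (oddWheel (2 * k + 1)).Adj (some i) (some j)) :
    HasOddConformalBicycle
      (oddWheel (2 * k + 1) ⊔ SimpleGraph.fromEdgeSet {s(some i, some j)}) := by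
  haveI : NeZero (2 * k + 1) := ⟨by omega⟩
  set G := oddWheel (2 * k + 1) ⊔ SimpleGraph.fromEdgeSet {s(some i, some j)} with hGdef
  have hG : oddWheel (2 * k + 1) ≤ G := le_sup_left
  have hchord : G.Adj (some j) (some i) := by
    rw [hGdef]
    refine (sup_adj _ _ _ _).mpr (Or.inr ?_)
    rw [fromEdgeSet_adj]
    exact ⟨by rw [Set.mem_singleton_iff, Sym2.eq_swap],
      fun h => hij (Option.some_injective _ h).symm⟩
  have hne1 : j ≠ i + 1 := by
    intro h
    exact hnadj ⟨fun hc => hij (Option.some_injective _ hc),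
      Or.inl (Or.inr ⟨i, j, rfl, rfl, h⟩)⟩
  have hne2 : i ≠ j + 1 := by
    intro h
    exact hnadj ⟨fun hc => hij (Option.some_injective _ hc),
      Or.inr (Or.inr ⟨j, i, rfl, rfl, h⟩)⟩
  have hcast : (((j - i).val : ℕ) : ZMod (2 * k + 1)) = j - i :=
    ZMod.natCast_rightInverse (j - i)
  set t0 := (j - i).val with ht0def
  have ht0lt : t0 < 2 * k + 1 := ZMod.val_lt _
  have ht0ne0 : t0 ≠ 0 := by
    intro h
    apply hij
    have hji : j - i = 0 := by rw [← hcast, h]; simp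
    exact (sub_eq_zero.mp hji).symm
  have ht0ne1 : t0 ≠ 1 := by
    intro h
    apply hne1
    have hji : j - i = 1 := by rw [← hcast, h]; simp
    rw [sub_eq_iff_eq_add] at hji
    rw [hji]
    ring
  have ht0ne2k : t0 ≠ 2 * k := by
    intro h
    apply hne2
    have h2 : ((2 * k : ℕ) : ZMod (2 * k + 1)) = -1 := by
      have h0 : ((2 * k + 1 : ℕ) : ZMod (2 * k + 1)) = 0 := ZMod.natCast_self _
      push_cast at h0 ⊢
      linear_combination h0
    have hji : j - i = -1 := by rw [← hcast, h, h2]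
    rw [sub_eq_iff_eq_add] at hji
    rw [hji]
    ring
  rcases Nat.even_or_odd t0 with he | ho
  · obtain ⟨c, hc⟩ := he
    refine main_bicycle ⟨k, by ring⟩ (by omega) hG i t0 (by omega) (by omega) ⟨c, hc⟩ ?_
    have hit : i + (t0 : ZMod (2 * k + 1)) = j := by rw [hcast]; ring
    rw [hit]
    exact hchord
  · obtain ⟨c, hc⟩ := ho
    have hsub : ((2 * k + 1 - t0 : ℕ) : ZMod (2 * k + 1)) = -(t0 : ZMod (2 * k + 1)) := by
      have h0 : ((2 * k + 1 : ℕ) : ZMod (2 * k + 1)) = 0 := ZMod.natCast_self _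
      rw [Nat.cast_sub (by omega), h0]
      ring
    refine main_bicycle ⟨k, by ring⟩ (by omega) hG j (2 * k + 1 - t0) (by omega) (by omega)
      ⟨k - c, by omega⟩ ?_
    have hjt : j + ((2 * k + 1 - t0 : ℕ) : ZMod (2 * k + 1)) = i := by
      rw [hsub, hcast]
      ring
    rw [hjt]
    exact hchord.symm
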